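/- Let B ∈ ℕ with B ≥ 1, μ > 0, and suppose q : [t₀, t₁] → [0,1]^ℕ has differentiable coordinates satisfying q̇(t, i) = −μ i [q(t, i) − q(t, i+1)] for all j < i ≤ B, with q(t, i) = 0 for all i > B, and q(t, i+1) ≤ q(t, i) for all i. Define v(t) = Σ_{i=j+1}^{B} q(t, i). Then v is differentiable on (t₀, t₁) with v̇(t) = −μ v(t) − μ j q(t, j+1), and hence v(t) ≤ v(t₀) e^{−μ(t − t₀)} for all t ∈ [t₀, t₁]. -/

import Mathlib

open Finset

lemma tele_sum (f : ℕ → ℝ) (j B : ℕ) (hjB : j ≤ B) :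
    ∑ i ∈ Finset.Icc (j + 1) B, (i : ℝ) * (f i - f (i + 1)) =
      ∑ i ∈ Finset.Icc (j + 1) B, f i + j * f (j + 1) - B * f (B + 1) := by
  induction B, hjB using Nat.le_induction with
  | base => simp [Finset.Icc_eq_empty (by omega : ¬ j + 1 ≤ j)]
  | succ n hn ih =>
      rw [Finset.sum_Icc_succ_top (by omega : j + 1 ≤ n + 1),
          Finset.sum_Icc_succ_top (by omega : j + 1 ≤ n + 1), ih]
      push_cast
      ring

/-- Exponential decay of the tail mass: if the coordinates `q(·, i)`, `j < i ≤ B`, evolve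
purely by departures (`q̇(t,i) = −μ i [q(t,i) − q(t,i+1)]`), with `q(·,i) = 0` for `i > B`,
then `v(t) = Σ_{i=j+1}^B q(t,i)` satisfies `v̇ = −μ v − μ j q(·, j+1)` and hence
`v(t) ≤ v(t₀) e^{−μ(t−t₀)}`. -/
theorem stmt11 (B j : ℕ) (hB : 1 ≤ B) (hj : 1 ≤ j) (μ : ℝ) (hμ : 0 < μ)
    (t₀ t₁ : ℝ) (ht : t₀ < t₁) (q : ℝ → ℕ → ℝ)
    (hrange : ∀ t ∈ Set.Icc t₀ t₁, ∀ i, q t i ∈ Set.Icc (0 : ℝ) 1)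
    (hmono : ∀ t ∈ Set.Icc t₀ t₁, ∀ i, q t (i + 1) ≤ q t i)
    (hzero : ∀ t ∈ Set.Icc t₀ t₁, ∀ i, B < i → q t i = 0)
    (hderiv : ∀ i, j < i → i ≤ B → ∀ t ∈ Set.Icc t₀ t₁,
      HasDerivWithinAt (fun s => q s i)
        (-μ * i * (q t i - q t (i + 1))) (Set.Icc t₀ t₁) t) :
    (∀ t ∈ Set.Ioo t₀ t₁,
      HasDerivAt (fun s => ∑ i ∈ Finset.Icc (j + 1) B, q s i)
        (-μ * (∑ i ∈ Finset.Icc (j + 1) B, q t i) - μ * j * q t (j + 1)) t) ∧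
    (∀ t ∈ Set.Icc t₀ t₁,
      (∑ i ∈ Finset.Icc (j + 1) B, q t i) ≤
        (∑ i ∈ Finset.Icc (j + 1) B, q t₀ i) * Real.exp (-μ * (t - t₀))) := by
  -- derivative of the tail sum, within the closed interval
  have hv : ∀ t ∈ Set.Icc t₀ t₁,
      HasDerivWithinAt (fun s => ∑ i ∈ Finset.Icc (j + 1) B, q s i)
        (-μ * (∑ i ∈ Finset.Icc (j + 1) B, q t i) - μ * j * q t (j + 1))
        (Set.Icc t₀ t₁) t := by
    intro t ht'
    have h1 : HasDerivWithinAt (fun s => ∑ i ∈ Finset.Icc (j + 1) B, q s i)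
        (∑ i ∈ Finset.Icc (j + 1) B, -μ * i * (q t i - q t (i + 1)))
        (Set.Icc t₀ t₁) t := by
      refine HasDerivWithinAt.fun_sum (fun i hi => ?_)
      obtain ⟨hi1, hi2⟩ := Finset.mem_Icc.mp hi
      exact hderiv i (by omega) hi2 t ht'
    have key : (∑ i ∈ Finset.Icc (j + 1) B, -μ * i * (q t i - q t (i + 1)))
        = -μ * (∑ i ∈ Finset.Icc (j + 1) B, q t i) - μ * j * q t (j + 1) := by
      rcases le_or_gt (j + 1) B with h | h
      · have hB1 : q t (B + 1) = 0 := hzero t ht' _ (Nat.lt_succ_self B)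
        have hT := tele_sum (q t) j B (by omega)
        have : (∑ i ∈ Finset.Icc (j + 1) B, -μ * i * (q t i - q t (i + 1)))
            = -μ * ∑ i ∈ Finset.Icc (j + 1) B, (i : ℝ) * (q t i - q t (i + 1)) := by
          rw [Finset.mul_sum]
          exact Finset.sum_congr rfl (fun i _ => by ring)
        rw [this, hT, hB1]
        ring
      · have hE : Finset.Icc (j + 1) B = ∅ := Finset.Icc_eq_empty (by omega)
        have hq : q t (j + 1) = 0 := hzero t ht' _ (by omega)
        simp [hE, hq]
    rwa [key] at h1
  have part1 : ∀ t ∈ Set.Ioo t₀ t₁,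
      HasDerivAt (fun s => ∑ i ∈ Finset.Icc (j + 1) B, q s i)
        (-μ * (∑ i ∈ Finset.Icc (j + 1) B, q t i) - μ * j * q t (j + 1)) t := by
    intro t ht'
    exact (hv t ⟨ht'.1.le, ht'.2.le⟩).hasDerivAt (Icc_mem_nhds ht'.1 ht'.2)
  refine ⟨part1, ?_⟩
  -- Grönwall via monotonicity of g t = v t * exp (μ (t - t₀))
  set v : ℝ → ℝ := fun s => ∑ i ∈ Finset.Icc (j + 1) B, q s i with hvdef
  set g : ℝ → ℝ := fun s => v s * Real.exp (μ * (s - t₀)) with hgdef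
  have hvcont : ContinuousOn v (Set.Icc t₀ t₁) :=
    fun t ht' => (hv t ht').continuousWithinAt
  have hgd : ∀ x ∈ Set.Ioo t₀ t₁,
      HasDerivAt g ((-μ * v x - μ * j * q x (j + 1)) * Real.exp (μ * (x - t₀))
        + v x * (Real.exp (μ * (x - t₀)) * μ)) x := by
    intro x hx
    have h2 : HasDerivAt (fun s : ℝ => μ * (s - t₀)) μ x := by
      simpa using ((hasDerivAt_id x).sub_const t₀).const_mul μ
    exact (part1 x hx).mul h2.exp
  have hanti : AntitoneOn g (Set.Icc t₀ t₁) := by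
    apply antitoneOn_of_deriv_nonpos (convex_Icc t₀ t₁)
    · exact hvcont.mul (Real.continuous_exp.comp (by continuity)).continuousOn
    · intro x hx
      rw [interior_Icc] at hx
      exact (hgd x hx).differentiableAt.differentiableWithinAt
    · intro x hx
      rw [interior_Icc] at hx
      rw [(hgd x hx).deriv]
      have hq0 : 0 ≤ q x (j + 1) := (hrange x ⟨hx.1.le, hx.2.le⟩ (j + 1)).1
      have hep : 0 < Real.exp (μ * (x - t₀)) := Real.exp_pos _
      have hjpos : (0 : ℝ) ≤ j := Nat.cast_nonneg j
      nlinarith [mul_nonneg (mul_nonneg (mul_nonneg hμ.le hjpos) hq0) hep.le]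
  intro t ht'
  have hgle : g t ≤ g t₀ := hanti (Set.left_mem_Icc.mpr ht.le) ht' ht'.1
  have hg0 : g t₀ = v t₀ := by simp [hgdef]
  have hE : Real.exp (μ * (t - t₀)) * Real.exp (-μ * (t - t₀)) = 1 := by
    rw [← Real.exp_add]
    norm_num
  have hE' : 0 < Real.exp (-μ * (t - t₀)) := Real.exp_pos _
  have h := mul_le_mul_of_nonneg_right (hg0 ▸ hgle) hE'.le
  simp only [hgdef] at h
  rw [mul_assoc, hE, mul_one] at h
  exact h
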